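/- Let α be a cocycle on the invertible ℤ-system Y = (Y, ν, S). Let D_k denote the partition of I into the 2^k dyadic intervals of length 2^{-k}, let P_k = { Y × E : E ∈ D_k } (a partition of Y × I), let μ_y = δ_y ⊗ m be the conditional measure of ν × m on the fiber {y} × I, and write dist_{μ_y}(P, Q) = μ_y{ x : P(x) ≠ Q(x) } for partitions P, Q of Y × I. If for every k ≥ 1 and every ε > 0, ν{ y ∈ Y : dist_{μ_y}(P_k, T_α^{-n}P_k) < ε for infinitely many n ∈ ℕ } = 1, then α is a rigid cocycle. -/

import Mathlib

open MeasureTheory Filter Set Topology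
open scoped ENNReal Classical symmDiff

section NatSlowEntropyDefs

/-- A Følner sequence for the additive semigroup `ℕ`: a sequence of nonempty finite subsets
`F n ⊆ ℕ` with `|(g + Fₙ) ∩ Fₙ| / |Fₙ| → 1` for every `g ∈ ℕ`. -/
def IsFolnerNat (F : ℕ → Finset ℕ) : Prop :=
  (∀ n, (F n).Nonempty) ∧ ∀ g : ℕ,
    Tendsto (fun n => ((((F n).image fun h => g + h) ∩ F n).card : ℝ) / ((F n).card : ℝ))
      atTop (nhds 1)

/-- A rate function: an increasing positive function on `ℕ` tending to infinity. -/
def IsRateFunction (U : ℕ → ℝ) : Prop :=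
  (∀ n, 0 < U n) ∧ Monotone U ∧ Tendsto U atTop atTop

/-- The normalized Hamming distance `d_{P,F}` (for iterates of a single map `T`). -/
noncomputable def hamDistNat {X : Type*} (T : X → X) {r : ℕ} (P : X → Fin r)
    (F : Finset ℕ) (x x' : X) : ℝ :=
  ((F.filter fun f => P (T^[f] x) ≠ P (T^[f] x')).card : ℝ) / (F.card : ℝ)

/-- The set `E` has `d_{P,F}`-diameter at most `ε`. -/
def diamLENat {X : Type*} (T : X → X) {r : ℕ} (P : X → Fin r) (F : Finset ℕ)
    (E : Set X) (ε : ℝ) : Prop :=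
  ∀ x ∈ E, ∀ x' ∈ E, hamDistNat T P F x x' ≤ ε

/-- The Hamming `ε`-covering number `cov(λ, P, F, ε)`. -/
noncomputable def hamCovNat {X : Type*} [MeasurableSpace X] (T : X → X) (lam : Measure X)
    {r : ℕ} (P : X → Fin r) (F : Finset ℕ) (ε : ℝ) : ℕ :=
  sInf {M : ℕ | ∃ E : Fin M → Set X, (∀ i, diamLENat T P F (E i) ε) ∧
    ENNReal.ofReal (1 - ε) ≤ lam (⋃ i, E i)}

/-- The relative Hamming `ε`-covering number `cov(μ, P, F, ε | π)`, defined through the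
disintegration `μy` over a factor map and the factor measure `ν`. -/
noncomputable def hamCovRelNat {X Y : Type*} [MeasurableSpace X] [MeasurableSpace Y]
    (T : X → X) (μy : Y → Measure X) (ν : Measure Y) {r : ℕ} (P : X → Fin r)
    (F : Finset ℕ) (ε : ℝ) : ℕ :=
  sInf {M : ℕ | ∃ S : Set Y, MeasurableSet S ∧ ENNReal.ofReal (1 - ε) ≤ ν S ∧
    ∀ y ∈ S, hamCovNat T (μy y) P F ε ≤ M}

/-- Slow entropy of a partition: `sup_{ε>0} limsup_n cov(μ, P, F_n, ε)/U(|F_n|)`. -/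
noncomputable def slowEntropyPartNat {X : Type*} [MeasurableSpace X] (T : X → X)
    (μ : Measure X) {r : ℕ} (P : X → Fin r) (U : ℕ → ℝ) (F : ℕ → Finset ℕ) : ℝ≥0∞ :=
  ⨆ ε ∈ Ioi (0 : ℝ),
    Filter.limsup (fun n => ENNReal.ofReal ((hamCovNat T μ P (F n) ε : ℝ) / U (F n).card))
      atTop

/-- Slow entropy: the supremum over all finite measurable partitions. -/
noncomputable def slowEntropyNat {X : Type*} [MeasurableSpace X] (T : X → X)
    (μ : Measure X) (U : ℕ → ℝ) (F : ℕ → Finset ℕ) : ℝ≥0∞ :=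
  ⨆ (r : ℕ) (P : X → Fin r) (_ : Measurable P), slowEntropyPartNat T μ P U F

/-- Relative slow entropy of a partition. -/
noncomputable def slowEntropyPartRelNat {X Y : Type*} [MeasurableSpace X] [MeasurableSpace Y]
    (T : X → X) (μy : Y → Measure X) (ν : Measure Y) {r : ℕ} (P : X → Fin r)
    (U : ℕ → ℝ) (F : ℕ → Finset ℕ) : ℝ≥0∞ :=
  ⨆ ε ∈ Ioi (0 : ℝ),
    Filter.limsup
      (fun n => ENNReal.ofReal ((hamCovRelNat T μy ν P (F n) ε : ℝ) / U (F n).card)) atTop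

/-- Relative slow entropy: the supremum over all finite measurable partitions. -/
noncomputable def slowEntropyRelNat {X Y : Type*} [MeasurableSpace X] [MeasurableSpace Y]
    (T : X → X) (μy : Y → Measure X) (ν : Measure Y)
    (U : ℕ → ℝ) (F : ℕ → Finset ℕ) : ℝ≥0∞ :=
  ⨆ (r : ℕ) (P : X → Fin r) (_ : Measurable P), slowEntropyPartRelNat T μy ν P U F

/-- The partition distance `dist_λ(P, Q) = λ{x : P(x) ≠ Q(x)}`. -/
noncomputable def partDist {Z : Type*} [MeasurableSpace Z] (lam : Measure Z)
    {ι : Type*} (P Q : Z → ι) : ℝ≥0∞ :=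
  lam {z | P z ≠ Q z}

/-- A rigid measure-preserving system: there is a sequence `0 < n₁ < n₂ < ⋯` with
`μ(T^{-n_k} A ∆ A) → 0` for every measurable `A`. -/
def IsRigidSystem {X : Type*} [MeasurableSpace X] (T : X → X) (μ : Measure X) : Prop :=
  ∃ n : ℕ → ℕ, StrictMono n ∧ 0 < n 0 ∧
    ∀ A : Set X, MeasurableSet A →
      Tendsto (fun k => μ ((T^[n k] ⁻¹' A) ∆ A)) atTop (nhds 0)

end NatSlowEntropyDefs

section AutIDefs

/-- The group of Lebesgue-measure-preserving (bi-measurable) automorphisms of the unit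
interval; we work with genuine measure-preserving measurable bijections as representatives
of their a.e.-equality classes. -/
def AutI : Type :=
  {φ : unitInterval ≃ᵐ unitInterval // MeasurePreserving φ volume volume}

/-- The skew product map `T_α(y, t) = (S y, α(y) t)` of a cocycle `α : Y → Aut(I,m)`. -/
def skewMap {Y : Type*} (S : Y → Y) (α : Y → AutI) :
    Y × unitInterval → Y × unitInterval :=
  fun p => (S p.1, (α p.1).1 p.2)

/-- The cocycle iterates `α_n(y) = α(S^{n-1} y) ∘ ⋯ ∘ α(S y) ∘ α(y)`, so that
`T_α^n (y,t) = (S^n y, α_n(y) t)`. -/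
def cocIter {Y : Type*} (S : Y → Y) (α : Y → AutI) : ℕ → Y → unitInterval → unitInterval
  | 0, _, t => t
  | n + 1, y, t => cocIter S α n (S y) ((α y).1 t)

/-- Convergence to the identity in the weak topology of `Aut(I,m)`:
`m(φₖ⁻¹ E ∆ E) → 0` for every measurable `E ⊆ I`. -/
def TendstoIdWeak (φ : ℕ → unitInterval → unitInterval) : Prop :=
  ∀ E : Set unitInterval, MeasurableSet E →
    Tendsto (fun k => (volume : Measure unitInterval) ((φ k ⁻¹' E) ∆ E)) atTop (nhds 0)

/-- A rigid cocycle: for `ν`-a.e. `y` there is a (`y`-dependent) strictly increasing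
sequence `(n_k)` with `α_{n_k}(y) → id` weakly. -/
def IsRigidCocycle {Y : Type*} [MeasurableSpace Y] (S : Y → Y) (ν : Measure Y)
    (α : Y → AutI) : Prop :=
  ∀ᵐ y ∂ν, ∃ n : ℕ → ℕ, StrictMono n ∧ TendstoIdWeak fun k => cocIter S α (n k) y

/-- The depth-`k` dyadic partition of the unit interval, as a labeled partition. -/
noncomputable def dyadicLabel (k : ℕ) (t : unitInterval) : Fin (2 ^ k) :=
  ⟨min ⌊(t : ℝ) * 2 ^ k⌋₊ (2 ^ k - 1), by
    have h : 0 < 2 ^ k := pow_pos (by norm_num) k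
    omega⟩

end AutIDefs


section Aux

lemma skewMap_iter {Y : Type*} (S : Y → Y) (α : Y → AutI) :
    ∀ (n : ℕ) (y : Y) (t : unitInterval),
      (skewMap S α)^[n] (y, t) = (S^[n] y, cocIter S α n y t) := by
  intro n
  induction n with
  | zero => intro y t; rfl
  | succ n ih =>
    intro y t
    rw [Function.iterate_succ_apply, Function.iterate_succ_apply]
    exact ih (S y) ((α y).1 t)

lemma cocIter_measurePreserving {Y : Type*} (S : Y → Y) (α : Y → AutI) :
    ∀ (n : ℕ) (y : Y), MeasurePreserving (cocIter S α n y) volume volume := by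
  intro n
  induction n with
  | zero => intro y; exact MeasurePreserving.id _
  | succ n ih =>
    intro y
    exact (ih (S y)).comp (α y).2

lemma measurable_dyadicLabel (k : ℕ) : Measurable (dyadicLabel k) := by
  apply measurable_to_countable
  intro y
  have hg : Measurable fun t : unitInterval => min ⌊(t : ℝ) * 2 ^ k⌋₊ (2 ^ k - 1) :=
    (measurable_subtype_coe.mul_const _).nat_floor.min measurable_const
  have : dyadicLabel k ⁻¹' {dyadicLabel k y}
      = (fun t : unitInterval => min ⌊(t : ℝ) * 2 ^ k⌋₊ (2 ^ k - 1)) ⁻¹'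
        {min ⌊(y : ℝ) * 2 ^ k⌋₊ (2 ^ k - 1)} := by
    ext t
    simp only [mem_preimage, mem_singleton_iff, dyadicLabel, Fin.mk.injEq]
  rw [this]
  exact hg (measurableSet_singleton _)

lemma dyadicLabel_val (k d : ℕ) (t : unitInterval) :
    (dyadicLabel k t).1 = min ((dyadicLabel (k + d) t).1 / 2 ^ d) (2 ^ k - 1) := by
  have h2d : (0:ℕ) < 2 ^ d := pow_pos (by norm_num) d
  have h2k : (0:ℕ) < 2 ^ k := pow_pos (by norm_num) k
  have hre : ((t : ℝ) * 2 ^ k) = ((t : ℝ) * 2 ^ (k + d)) / ((2 ^ d : ℕ) : ℝ) := by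
    push_cast
    rw [pow_add]
    field_simp
  have hfl : ⌊(t : ℝ) * 2 ^ k⌋₊ = ⌊(t : ℝ) * 2 ^ (k + d)⌋₊ / 2 ^ d := by
    rw [hre, Nat.floor_div_natCast]
  have hbound : ⌊(t : ℝ) * 2 ^ (k + d)⌋₊ ≤ 2 ^ (k + d) := by
    have h1 : (t : ℝ) * 2 ^ (k + d) ≤ ((2 ^ (k + d) : ℕ) : ℝ) := by
      push_cast
      nlinarith [t.2.1, t.2.2, pow_pos (by norm_num : (0:ℝ) < 2) (k + d)]
    calc ⌊(t : ℝ) * 2 ^ (k + d)⌋₊ ≤ ⌊((2 ^ (k + d) : ℕ) : ℝ)⌋₊ := Nat.floor_le_floor h1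
    _ = 2 ^ (k + d) := Nat.floor_natCast _
  simp only [dyadicLabel, hfl]
  set x := ⌊(t : ℝ) * 2 ^ (k + d)⌋₊ with hx
  rw [pow_add] at hbound ⊢
  set a := 2 ^ k with ha
  set b := 2 ^ d with hb
  -- goal : min (x / b) (a - 1) = min (min x (a * b - 1) / b) (a - 1)
  rcases lt_or_eq_of_le hbound with h | h
  · have : min x (a * b - 1) = x := min_eq_left (by omega)
    rw [this]
  · have hxd : x / b = a := by rw [h, Nat.mul_div_cancel _ h2d]
    have hdiv : (a * b - 1) / b = a - 1 := by
      have hba : b ≤ a * b := Nat.le_mul_of_pos_left b h2k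
      have h1 : (a - 1) * b = a * b - b := by rw [Nat.sub_mul, one_mul]
      have hab : a * b - 1 = (b - 1) + (a - 1) * b := by rw [h1]; omega
      rw [hab, Nat.add_mul_div_right _ _ h2d, Nat.div_eq_of_lt (by omega)]
      omega
    have : min x (a * b - 1) = a * b - 1 := min_eq_right (by omega)
    rw [this, hdiv, hxd]
    omega

lemma dyadicLabel_refines {k k' : ℕ} (h : k ≤ k') {t t' : unitInterval}
    (he : dyadicLabel k' t = dyadicLabel k' t') : dyadicLabel k t = dyadicLabel k t' := by
  obtain ⟨d, rfl⟩ := Nat.exists_eq_add_of_le h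
  apply Fin.ext
  rw [dyadicLabel_val k d t, dyadicLabel_val k d t', he]

lemma dyadicLabel_dist {k : ℕ} {t x : unitInterval}
    (h : dyadicLabel k t = dyadicLabel k x) : |(t : ℝ) - x| ≤ (2 ^ k)⁻¹ := by
  have hp : (0:ℝ) < 2 ^ k := pow_pos (by norm_num) k
  have key : ∀ v : unitInterval, ((dyadicLabel k v).1 : ℝ) ≤ (v : ℝ) * 2 ^ k ∧
      (v : ℝ) * 2 ^ k ≤ ((dyadicLabel k v).1 : ℝ) + 1 := by
    intro v
    have hv0 : (0:ℝ) ≤ (v : ℝ) * 2 ^ k := mul_nonneg v.2.1 hp.le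
    have hfl : (⌊(v : ℝ) * 2 ^ k⌋₊ : ℝ) ≤ (v : ℝ) * 2 ^ k := Nat.floor_le hv0
    have hfl2 : (v : ℝ) * 2 ^ k < ⌊(v : ℝ) * 2 ^ k⌋₊ + 1 := Nat.lt_floor_add_one _
    have hvle : (v : ℝ) * 2 ^ k ≤ 2 ^ k := by nlinarith [v.2.2]
    simp only [dyadicLabel]
    rcases le_or_gt ⌊(v : ℝ) * 2 ^ k⌋₊ (2 ^ k - 1) with hc | hc
    · rw [min_eq_left hc]
      exact ⟨hfl, hfl2.le⟩
    · rw [min_eq_right hc.le]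
      have h2k : (1:ℕ) ≤ 2 ^ k := Nat.one_le_two_pow
      have hn : 2 ^ k ≤ ⌊(v : ℝ) * 2 ^ k⌋₊ := by omega
      have hge : ((2 ^ k : ℕ) : ℝ) ≤ (⌊(v : ℝ) * 2 ^ k⌋₊ : ℝ) := Nat.cast_le.2 hn
      have hge2 : (2 : ℝ) ^ k ≤ (v : ℝ) * 2 ^ k := by
        have := hge.trans hfl
        push_cast at this
        linarith
      constructor
      · push_cast [h2k]
        linarith
      · push_cast [h2k]
        linarith
  obtain ⟨h1, h2⟩ := key t
  obtain ⟨h3, h4⟩ := key x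
  rw [h] at h1 h2
  have hd1 : (t : ℝ) * 2 ^ k - (x : ℝ) * 2 ^ k ≤ 1 := by linarith
  have hd2 : (x : ℝ) * 2 ^ k - (t : ℝ) * 2 ^ k ≤ 1 := by linarith
  have hr1 : ((t : ℝ) - x) * 2 ^ k = (t : ℝ) * 2 ^ k - (x : ℝ) * 2 ^ k := by ring
  have hr2 : ((x : ℝ) - t) * 2 ^ k = (x : ℝ) * 2 ^ k - (t : ℝ) * 2 ^ k := by ring
  rw [abs_le]
  constructor
  · rw [neg_le, ← one_div, le_div_iff₀ hp]
    nlinarith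
  · rw [← one_div, le_div_iff₀ hp]
    nlinarith


lemma dyadic_approx (E : Set unitInterval) (hE : MeasurableSet E) {r : ℝ} (hr : 0 < r) :
    ∃ (k : ℕ) (J : Set (Fin (2 ^ k))),
      volume (E ∆ (dyadicLabel k ⁻¹' J)) < ENNReal.ofReal r := by
  have hne : ENNReal.ofReal (r / 2) ≠ 0 := by
    simp [ENNReal.ofReal_eq_zero, not_le, half_pos hr]
  obtain ⟨K, hKE, hKc, hK⟩ := @MeasurableSet.exists_isCompact_diff_lt unitInterval _ volume _ _ _ _ _ hE (measure_ne_top _ _) _ hne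
  obtain ⟨U, hEU, hUo, _, hU⟩ := @MeasurableSet.exists_isOpen_diff_lt unitInterval _ volume _ _ _ hE (measure_ne_top _ _) _ hne
  have hKU : K ⊆ U := hKE.trans hEU
  obtain ⟨δ, hδ, hth⟩ := hKc.exists_thickening_subset_open hUo hKU
  obtain ⟨k, hk⟩ : ∃ k : ℕ, ((1 : ℝ) / 2) ^ k < δ := exists_pow_lt_of_lt_one hδ (by norm_num)
  refine ⟨k, dyadicLabel k '' K, ?_⟩
  set A := dyadicLabel k ⁻¹' (dyadicLabel k '' K) with hA
  have hKA : K ⊆ A := subset_preimage_image _ _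
  have hAU : A ⊆ U := by
    intro t ht
    obtain ⟨x, hxK, hxt⟩ := ht
    apply hth
    rw [Metric.mem_thickening_iff]
    refine ⟨x, hxK, ?_⟩
    rw [Subtype.dist_eq, Real.dist_eq]
    calc |(t : ℝ) - x| ≤ (2 ^ k)⁻¹ := dyadicLabel_dist hxt.symm
    _ = ((1:ℝ)/2) ^ k := by rw [one_div, inv_pow]
    _ < δ := hk
  have hsub : E ∆ A ⊆ (E \ K) ∪ (U \ E) := by
    rw [Set.symmDiff_def]
    apply union_subset
    · exact fun t ht => Or.inl ⟨ht.1, fun h => ht.2 (hKA h)⟩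
    · exact fun t ht => Or.inr ⟨hAU ht.1, ht.2⟩
  calc volume (E ∆ A) ≤ volume ((E \ K) ∪ (U \ E)) := measure_mono hsub
  _ ≤ volume (E \ K) + volume (U \ E) := measure_union_le _ _
  _ < ENNReal.ofReal (r / 2) + ENNReal.ofReal (r / 2) := ENNReal.add_lt_add hK hU
  _ = ENNReal.ofReal r := by
      rw [← ENNReal.ofReal_add (by linarith) (by linarith)]
      norm_num


end Aux

/-- Lemma `RigidityDiagonalization`.
Let `α` be a cocycle on the invertible `ℤ`-system `(Y, ν, S)`, `D_k` the dyadic partition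
of `I`, `P_k = {Y × E : E ∈ D_k}` and `μ_y = δ_y ⊗ m`.  If for every `k ≥ 1` and `ε > 0`,
`ν`-almost every `y` satisfies `dist_{μ_y}(P_k, T_α^{-n} P_k) < ε` for infinitely many `n`,
then `α` is a rigid cocycle. -/
theorem rigidity_diagonalization
    {Y : Type*} [MeasurableSpace Y] [StandardBorelSpace Y]
    (ν : Measure Y) [IsProbabilityMeasure ν]
    (S : Y ≃ᵐ Y) (hS : MeasurePreserving S ν ν)
    (α : Y → AutI) (hα : Measurable (skewMap (⇑S) α))
    (hyp : ∀ k : ℕ, 1 ≤ k → ∀ ε : ℝ, 0 < ε →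
      ν {y : Y |
        {n : ℕ |
          partDist ((Measure.dirac y).prod volume)
            (fun p : Y × unitInterval => dyadicLabel k p.2)
            (fun p : Y × unitInterval => dyadicLabel k (((skewMap (⇑S) α)^[n] p).2)) <
          ENNReal.ofReal ε}.Infinite} = 1) :
    IsRigidCocycle (⇑S) ν α := by
  classical
  -- the "bad" sets in the product space
  set M : ℕ → ℕ → Set (Y × unitInterval) := fun k n =>
    {p : Y × unitInterval | dyadicLabel k p.2 ≠ dyadicLabel k (((skewMap (⇑S) α)^[n] p).2)}
    with hMdef
  have hM : ∀ k n, MeasurableSet (M k n) := by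
    intro k n
    have hPm : Measurable fun p : Y × unitInterval => dyadicLabel k p.2 :=
      (measurable_dyadicLabel k).comp measurable_snd
    have hQm : Measurable fun p : Y × unitInterval =>
        dyadicLabel k (((skewMap (⇑S) α)^[n] p).2) :=
      (measurable_dyadicLabel k).comp (measurable_snd.comp (hα.iterate n))
    have heq : {p : Y × unitInterval |
        dyadicLabel k p.2 = dyadicLabel k (((skewMap (⇑S) α)^[n] p).2)}
        = ⋃ i : Fin (2 ^ k),
          ((fun p : Y × unitInterval => dyadicLabel k p.2) ⁻¹' {i}) ∩
          ((fun p : Y × unitInterval => dyadicLabel k (((skewMap (⇑S) α)^[n] p).2)) ⁻¹' {i}) := by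
      ext p
      simp only [mem_setOf_eq, mem_iUnion, mem_inter_iff, mem_preimage, mem_singleton_iff]
      constructor
      · intro h; exact ⟨dyadicLabel k p.2, rfl, h.symm⟩
      · rintro ⟨i, h1, h2⟩; rw [h1, h2]
    have : MeasurableSet {p : Y × unitInterval |
        dyadicLabel k p.2 = dyadicLabel k (((skewMap (⇑S) α)^[n] p).2)} := by
      rw [heq]
      exact MeasurableSet.iUnion fun i =>
        (hPm (measurableSet_singleton i)).inter (hQm (measurableSet_singleton i))
    simpa [hMdef, Set.compl_setOf] using this.compl
  -- sections of the bad sets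
  have hsec : ∀ k n (y : Y), Prod.mk y ⁻¹' (M k n)
      = {t : unitInterval | dyadicLabel k t ≠ dyadicLabel k (cocIter (⇑S) α n y t)} := by
    intro k n y
    ext t
    simp only [hMdef, mem_preimage, mem_setOf_eq, skewMap_iter]
  -- the partition distance equals the fiber measure of the bad set
  have hpd : ∀ k n (y : Y),
      partDist ((Measure.dirac y).prod volume)
        (fun p : Y × unitInterval => dyadicLabel k p.2)
        (fun p : Y × unitInterval => dyadicLabel k (((skewMap (⇑S) α)^[n] p).2))
      = volume {t : unitInterval |
          dyadicLabel k t ≠ dyadicLabel k (cocIter (⇑S) α n y t)} := by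
    intro k n y
    have : partDist ((Measure.dirac y).prod volume)
        (fun p : Y × unitInterval => dyadicLabel k p.2)
        (fun p : Y × unitInterval => dyadicLabel k (((skewMap (⇑S) α)^[n] p).2))
        = ((Measure.dirac y).prod volume) (M k n) := rfl
    rw [this, Measure.dirac_prod, Measure.map_apply measurable_prodMk_left (hM k n), hsec]
  -- almost every y is good at every scale
  have hinf : ∀ m : ℕ, ∀ᵐ y ∂ν, {n : ℕ | volume {t : unitInterval |
      dyadicLabel (m + 1) t ≠ dyadicLabel (m + 1) (cocIter (⇑S) α n y t)}
      < ENNReal.ofReal (1 / ((m : ℝ) + 1))}.Infinite := by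
    intro m
    have hpos : (0:ℝ) < 1 / ((m : ℝ) + 1) := by positivity
    have h1 := hyp (m + 1) (Nat.le_add_left 1 m) (1 / ((m : ℝ) + 1)) hpos
    have hset : {y : Y | {n : ℕ |
        partDist ((Measure.dirac y).prod volume)
          (fun p : Y × unitInterval => dyadicLabel (m + 1) p.2)
          (fun p : Y × unitInterval => dyadicLabel (m + 1) (((skewMap (⇑S) α)^[n] p).2)) <
        ENNReal.ofReal (1 / ((m : ℝ) + 1))}.Infinite}
      = {y : Y | {n : ℕ | volume {t : unitInterval |
          dyadicLabel (m + 1) t ≠ dyadicLabel (m + 1) (cocIter (⇑S) α n y t)}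
          < ENNReal.ofReal (1 / ((m : ℝ) + 1))}.Infinite} := by
      apply Set.ext; intro y
      have : {n : ℕ |
          partDist ((Measure.dirac y).prod volume)
            (fun p : Y × unitInterval => dyadicLabel (m + 1) p.2)
            (fun p : Y × unitInterval => dyadicLabel (m + 1) (((skewMap (⇑S) α)^[n] p).2)) <
          ENNReal.ofReal (1 / ((m : ℝ) + 1))}
        = {n : ℕ | volume {t : unitInterval |
            dyadicLabel (m + 1) t ≠ dyadicLabel (m + 1) (cocIter (⇑S) α n y t)}
            < ENNReal.ofReal (1 / ((m : ℝ) + 1))} := by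
        apply Set.ext; intro n
        simp only [mem_setOf_eq, hpd]
      simp only [mem_setOf_eq, this]
    rw [hset] at h1
    have hmeasF : ∀ n : ℕ, Measurable fun y : Y => volume {t : unitInterval |
        dyadicLabel (m + 1) t ≠ dyadicLabel (m + 1) (cocIter (⇑S) α n y t)} := by
      intro n
      have := measurable_measure_prodMk_left (ν := (volume : Measure unitInterval)) (hM (m + 1) n)
      simp only [hsec] at this
      exact this
    have hmeasS : MeasurableSet {y : Y | {n : ℕ | volume {t : unitInterval |
        dyadicLabel (m + 1) t ≠ dyadicLabel (m + 1) (cocIter (⇑S) α n y t)}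
        < ENNReal.ofReal (1 / ((m : ℝ) + 1))}.Infinite} := by
      have hrep : {y : Y | {n : ℕ | volume {t : unitInterval |
          dyadicLabel (m + 1) t ≠ dyadicLabel (m + 1) (cocIter (⇑S) α n y t)}
          < ENNReal.ofReal (1 / ((m : ℝ) + 1))}.Infinite}
        = ⋂ N : ℕ, ⋃ n : ℕ, ⋃ _ : N < n, {y : Y | volume {t : unitInterval |
            dyadicLabel (m + 1) t ≠ dyadicLabel (m + 1) (cocIter (⇑S) α n y t)}
            < ENNReal.ofReal (1 / ((m : ℝ) + 1))} := by
        ext y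
        simp only [mem_setOf_eq, mem_iInter, mem_iUnion]
        constructor
        · intro h N
          obtain ⟨b, hb, hNb⟩ := h.exists_gt N
          exact ⟨b, hNb, hb⟩
        · intro h
          by_contra hfin
          rw [Set.not_infinite] at hfin
          obtain ⟨N, hN⟩ := hfin.bddAbove
          obtain ⟨n, hn, hnS⟩ := h N
          exact absurd (hN hnS) (by omega)
      rw [hrep]
      exact MeasurableSet.iInter fun N => MeasurableSet.iUnion fun n =>
        MeasurableSet.iUnion fun _ => (hmeasF n) measurableSet_Iio
    rw [← prob_compl_eq_zero_iff hmeasS] at h1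
    exact mem_ae_iff.2 h1
  filter_upwards [ae_all_iff.2 hinf] with y hy
  -- build the rigidity sequence
  choose g hg1 hg2 using fun (m N : ℕ) => (hy m).exists_gt N
  let nseq : ℕ → ℕ := fun m => Nat.rec (g 0 0) (fun m ih => g (m + 1) ih) m
  have hmem : ∀ m : ℕ, volume {t : unitInterval |
      dyadicLabel (m + 1) t ≠ dyadicLabel (m + 1) (cocIter (⇑S) α (nseq m) y t)}
      < ENNReal.ofReal (1 / ((m : ℝ) + 1)) := by
    intro m
    cases m with
    | zero => exact hg1 0 0
    | succ m => exact hg1 (m + 1) (nseq m)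
  have hlt : ∀ m : ℕ, nseq m < nseq (m + 1) := fun m => hg2 (m + 1) (nseq m)
  refine ⟨nseq, strictMono_nat_of_lt_succ hlt, ?_⟩
  intro E hE
  rw [ENNReal.tendsto_nhds_zero]
  intro ε hε
  obtain ⟨r, -, h1, h2⟩ := ENNReal.lt_iff_exists_real_btwn.1 hε
  have hr0 : (0:ℝ) < r := ENNReal.ofReal_pos.1 h1
  have hrε : ENNReal.ofReal r ≤ ε := h2.le
  obtain ⟨k, J, hAppr⟩ := dyadic_approx E hE (show (0:ℝ) < r / 3 by linarith)
  set A := dyadicLabel k ⁻¹' J with hA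
  have hJm : MeasurableSet J := by measurability
  have hAm : MeasurableSet A := measurable_dyadicLabel k hJm
  rw [eventually_atTop]
  refine ⟨max k ⌈3 / r⌉₊, fun m hm => ?_⟩
  have hkm : k ≤ m + 1 := le_trans (le_max_left _ _) (le_trans hm (Nat.le_succ m))
  have hmr : (1:ℝ) / ((m : ℝ) + 1) ≤ r / 3 := by
    have hce : (⌈3 / r⌉₊ : ℝ) ≤ m := Nat.cast_le.2 (le_trans (le_max_right _ _) hm)
    have h3r : (3:ℝ) / r ≤ (m : ℝ) + 1 := le_trans (Nat.le_ceil _) (by linarith)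
    have h3 : (3:ℝ) ≤ ((m : ℝ) + 1) * r := (div_le_iff₀ hr0).1 h3r
    rw [div_le_div_iff₀ (by positivity) (by norm_num : (0:ℝ) < 3)]
    nlinarith
  set φ : unitInterval → unitInterval := cocIter (⇑S) α (nseq m) y with hφdef
  have hφ : MeasurePreserving φ volume volume := cocIter_measurePreserving (⇑S) α (nseq m) y
  -- the three-term bound
  have hb1 : volume ((φ ⁻¹' E) ∆ (φ ⁻¹' A)) ≤ ENNReal.ofReal (r / 3) := by
    rw [← Set.preimage_symmDiff, hφ.measure_preimage (hE.symmDiff hAm).nullMeasurableSet]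
    exact hAppr.le
  have hb2 : volume ((φ ⁻¹' A) ∆ A) ≤ ENNReal.ofReal (r / 3) := by
    have hincl : (φ ⁻¹' A) ∆ A ⊆ {t : unitInterval |
        dyadicLabel (m + 1) t ≠ dyadicLabel (m + 1) (φ t)} := by
      intro t ht
      simp only [mem_setOf_eq]
      intro heq
      have hkeq : dyadicLabel k (φ t) = dyadicLabel k t :=
        (dyadicLabel_refines hkm heq).symm
      have hiff : φ t ∈ A ↔ t ∈ A := by
        simp only [hA, mem_preimage, hkeq]
      rw [Set.mem_symmDiff] at ht
      rcases ht with ⟨ht1, ht2⟩ | ⟨ht1, ht2⟩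
      · exact ht2 (hiff.1 ht1)
      · exact ht2 (hiff.2 ht1)
    calc volume ((φ ⁻¹' A) ∆ A)
        ≤ volume {t : unitInterval |
            dyadicLabel (m + 1) t ≠ dyadicLabel (m + 1) (φ t)} := measure_mono hincl
      _ ≤ ENNReal.ofReal (1 / ((m : ℝ) + 1)) := (hmem m).le
      _ ≤ ENNReal.ofReal (r / 3) := ENNReal.ofReal_le_ofReal hmr
  have hb3 : volume (A ∆ E) ≤ ENNReal.ofReal (r / 3) := by
    rw [symmDiff_comm]
    exact hAppr.le
  calc volume ((φ ⁻¹' E) ∆ E)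
      ≤ volume (((φ ⁻¹' E) ∆ (φ ⁻¹' A)) ∪ ((φ ⁻¹' A) ∆ E)) :=
        measure_mono (symmDiff_triangle _ _ _)
    _ ≤ volume ((φ ⁻¹' E) ∆ (φ ⁻¹' A)) + volume ((φ ⁻¹' A) ∆ E) := measure_union_le _ _
    _ ≤ volume ((φ ⁻¹' E) ∆ (φ ⁻¹' A)) +
        (volume ((φ ⁻¹' A) ∆ A) + volume (A ∆ E)) := by
        gcongr
        calc volume ((φ ⁻¹' A) ∆ E)
            ≤ volume (((φ ⁻¹' A) ∆ A) ∪ (A ∆ E)) := measure_mono (symmDiff_triangle _ _ _)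
          _ ≤ volume ((φ ⁻¹' A) ∆ A) + volume (A ∆ E) := measure_union_le _ _
    _ ≤ ENNReal.ofReal (r / 3) + (ENNReal.ofReal (r / 3) + ENNReal.ofReal (r / 3)) := by
        gcongr
    _ = ENNReal.ofReal r := by
        rw [← ENNReal.ofReal_add (by linarith) (by linarith),
          ← ENNReal.ofReal_add (by linarith) (by linarith)]
        congr 1
        ring
    _ ≤ ε := hrε
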